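/- Let G₁, G₂ be sub-σ-algebras of F and set φ(G₁,G₂) = sup{ |P(B|A) − P(B)| : A ∈ G₁, B ∈ G₂, P(A) > 0 }. For i = 1,2 let V_i be an X^{d_i}-valued G_i-measurable random variable with law μ_i; set d = d₁ + d₂, μ = μ₁ × μ₂, let ζ be the law of (V₁,V₂) and ν = (ζ + μ)/2. Then for every H ∈ L^∞(X^d, Borel, ν), the conditional expectation E[H(V₁,V₂) | G₁] exists, h(v) = E[H(v,V₂)] exists for μ₁-almost every v ∈ X^{d₁}, and P-almost surely |E[H(V₁,V₂) | G₁] − h(V₁)| ≤ 2 ‖H‖_{L^∞(ν)} φ(G₁,G₂). -/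

import Mathlib

open MeasureTheory ProbabilityTheory Filter
open scoped ENNReal NNReal

/-- The φ-dependence coefficient between two sub-σ-algebras:
`φ(𝔊,ℌ) = sup{|P(B|A) − P(B)| : A ∈ 𝔊, B ∈ ℌ, P(A) > 0}`. -/
noncomputable def phiDep {Ω : Type*} [MeasurableSpace Ω] (P : Measure Ω)
    (𝔊 ℌ : MeasurableSpace Ω) : ℝ :=
  sSup {x : ℝ | ∃ A B : Set Ω, MeasurableSet[𝔊] A ∧ MeasurableSet[ℌ] B ∧ 0 < P A ∧
    x = |(P (A ∩ B) / P A).toReal - (P B).toReal|}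

section AuxiliaryProofs
open Set


section TV
variable {Z₁ Z₂ : Type*} [MeasurableSpace Z₁] [MeasurableSpace Z₂]

/-- A "grid set": finite union of rectangles whose bases partition `Z₁`. -/
def GoodSet (T : Set (Z₁ × Z₂)) : Prop :=
  ∃ (ι : Type) (_ : Fintype ι) (B : ι → Set Z₁) (C : ι → Set Z₂),
    (∀ i, MeasurableSet (B i)) ∧ (∀ i, MeasurableSet (C i)) ∧
    Pairwise (Function.onFun Disjoint B) ∧ (⋃ i, B i) = Set.univ ∧
    T = ⋃ i, (B i) ×ˢ (C i)

lemma goodSet_empty : GoodSet (∅ : Set (Z₁ × Z₂)) :=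
  ⟨Unit, inferInstance, fun _ => univ, fun _ => ∅, fun _ => .univ, fun _ => .empty,
    Set.pairwise_univ.mp (by simp [Set.Pairwise]), by simp [Set.iUnion_const], by simp⟩

lemma goodSet_rect {B₁ : Set Z₁} {B₂ : Set Z₂} (h₁ : MeasurableSet B₁) (h₂ : MeasurableSet B₂) :
    GoodSet (B₁ ×ˢ B₂) := by
  refine ⟨Bool, inferInstance, fun b => if b then B₁ else B₁ᶜ, fun b => if b then B₂ else ∅,
    ?_, ?_, ?_, ?_, ?_⟩
  · rintro (_|_) <;> simp [h₁, h₁.compl]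
  · rintro (_|_) <;> simp [h₂]
  · intro i j h
    simp only [Function.onFun]
    cases i <;> cases j <;>
      simp_all [disjoint_compl_left, disjoint_compl_right]
  · ext x; by_cases hx : x ∈ B₁ <;> simp [hx]
  · ext ⟨x, y⟩; by_cases hx : x ∈ B₁ <;> simp [hx]

lemma goodSet_measurableSet {T : Set (Z₁ × Z₂)} (hT : GoodSet T) : MeasurableSet T := by
  obtain ⟨ι, _, B, C, hB, hC, -, -, rfl⟩ := hT
  exact MeasurableSet.iUnion fun i => (hB i).prod (hC i)

lemma goodSet_compl {T : Set (Z₁ × Z₂)} (hT : GoodSet T) : GoodSet Tᶜ := by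
  obtain ⟨ι, _, B, C, hB, hC, hd, hcov, rfl⟩ := hT
  refine ⟨ι, ‹_›, B, fun i => (C i)ᶜ, hB, fun i => (hC i).compl, hd, hcov, ?_⟩
  ext ⟨x, y⟩
  simp only [mem_compl_iff, mem_iUnion, mem_prod, not_exists, not_and]
  constructor
  · intro h
    obtain ⟨i, hi⟩ : ∃ i, x ∈ B i := by
      have := hcov ▸ (mem_univ x); simpa using this
    exact ⟨i, hi, h i hi⟩
  · rintro ⟨i, hi, hyc⟩ j hj
    rcases eq_or_ne i j with rfl | hne
    · exact hyc
    · exact absurd hi (Set.disjoint_left.mp (hd hne).symm hj)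

lemma goodSet_union {T T' : Set (Z₁ × Z₂)} (hT : GoodSet T) (hT' : GoodSet T') :
    GoodSet (T ∪ T') := by
  obtain ⟨ι, _, B, C, hB, hC, hd, hcov, rfl⟩ := hT
  obtain ⟨ι', _, B', C', hB', hC', hd', hcov', rfl⟩ := hT'
  refine ⟨ι × ι', inferInstance, fun p => B p.1 ∩ B' p.2, fun p => C p.1 ∪ C' p.2,
    fun p => (hB p.1).inter (hB' p.2), fun p => (hC p.1).union (hC' p.2), ?_, ?_, ?_⟩
  · rintro ⟨i, j⟩ ⟨k, l⟩ hne
    rcases eq_or_ne i k with rfl | hik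
    · have hjl : j ≠ l := by simpa [Prod.ext_iff] using hne
      exact Disjoint.mono inter_subset_right inter_subset_right (hd' hjl)
    · exact Disjoint.mono inter_subset_left inter_subset_left (hd hik)
  · ext x
    have h1 : ∃ i, x ∈ B i := by have := hcov ▸ (mem_univ x); simpa using this
    have h2 : ∃ j, x ∈ B' j := by have := hcov' ▸ (mem_univ x); simpa using this
    obtain ⟨i, hi⟩ := h1; obtain ⟨j, hj⟩ := h2
    simp only [mem_iUnion, mem_inter_iff, mem_univ, iff_true]
    exact ⟨⟨i, j⟩, hi, hj⟩
  · ext ⟨x, y⟩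
    simp only [mem_union, mem_iUnion, mem_prod, mem_inter_iff]
    constructor
    · rintro (⟨i, hxi, hyi⟩ | ⟨j, hxj, hyj⟩)
      · obtain ⟨j, hj⟩ : ∃ j, x ∈ B' j := by have := hcov' ▸ (mem_univ x); simpa using this
        exact ⟨⟨i, j⟩, ⟨hxi, hj⟩, Or.inl hyi⟩
      · obtain ⟨i, hi⟩ : ∃ i, x ∈ B i := by have := hcov ▸ (mem_univ x); simpa using this
        exact ⟨⟨i, j⟩, ⟨hi, hxj⟩, Or.inr hyj⟩
    · rintro ⟨⟨i, j⟩, ⟨hxi, hxj⟩, hy | hy⟩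
      · exact Or.inl ⟨i, hxi, hy⟩
      · exact Or.inr ⟨j, hxj, hy⟩

end TV
open MeasureTheory Filter Set
open scoped ENNReal

section TV2
variable {α : Type*} [MeasurableSpace α]

lemma abs_toReal_sub_le_symmDiff (μ : Measure α) [IsFiniteMeasure μ] (S T : Set α) :
    |(μ S).toReal - (μ T).toReal| ≤ (μ (symmDiff S T)).toReal := by
  have hsub : ∀ U V : Set α, U ⊆ V ∪ symmDiff U V := by
    intro U V z hz
    by_cases h : z ∈ V
    · exact Or.inl h
    · exact Or.inr (mem_symmDiff.mpr (Or.inl ⟨hz, h⟩))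
  have key : ∀ U V : Set α, (μ U).toReal - (μ V).toReal ≤ (μ (symmDiff U V)).toReal := by
    intro U V
    have h1 : μ U ≤ μ V + μ (symmDiff U V) :=
      le_trans (measure_mono (hsub U V)) (measure_union_le _ _)
    have h2 : (μ U).toReal ≤ (μ V).toReal + (μ (symmDiff U V)).toReal := by
      rw [← ENNReal.toReal_add (measure_ne_top _ _) (measure_ne_top _ _)]
      exact ENNReal.toReal_mono (by finiteness) h1
    linarith
  rw [abs_sub_le_iff]
  exact ⟨key S T, by rw [symmDiff_comm]; exact key T S⟩

end TV2

section TV3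
variable {Z₁ Z₂ : Type*} [MeasurableSpace Z₁] [MeasurableSpace Z₂]

lemma goodSet_bound {δ η : Measure (Z₁ × Z₂)} {κ : Measure Z₁}
    [IsFiniteMeasure δ] [IsFiniteMeasure η] [IsFiniteMeasure κ]
    {ε : ℝ} (hrect : ∀ B₁ B₂, MeasurableSet B₁ → MeasurableSet B₂ →
      |(δ (B₁ ×ˢ B₂)).toReal - (η (B₁ ×ˢ B₂)).toReal| ≤ ε * (κ B₁).toReal)
    {T : Set (Z₁ × Z₂)} (hT : GoodSet T) :
    |(δ T).toReal - (η T).toReal| ≤ ε * (κ Set.univ).toReal := by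
  classical
  obtain ⟨ι, _, B, C, hB, hC, hd, hcov, rfl⟩ := hT
  have hdisj : Pairwise (Function.onFun Disjoint fun i => (B i) ×ˢ (C i)) := by
    intro i j hij
    exact Set.disjoint_left.mpr fun z hz hz' => Set.disjoint_left.mp (hd hij) hz.1 hz'.1
  have hprodmeas : ∀ i, MeasurableSet ((B i) ×ˢ (C i)) := fun i => (hB i).prod (hC i)
  have hδ : δ (⋃ i, (B i) ×ˢ (C i)) = ∑ i, δ ((B i) ×ˢ (C i)) := by
    rw [measure_iUnion hdisj hprodmeas, tsum_fintype]
  have hη : η (⋃ i, (B i) ×ˢ (C i)) = ∑ i, η ((B i) ×ˢ (C i)) := by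
    rw [measure_iUnion hdisj hprodmeas, tsum_fintype]
  have hκ : κ (Set.univ : Set Z₁) = ∑ i, κ (B i) := by
    rw [← hcov, measure_iUnion hd hB, tsum_fintype]
  rw [hδ, hη, hκ, ENNReal.toReal_sum (fun a _ => measure_ne_top _ _),
    ENNReal.toReal_sum (fun a _ => measure_ne_top _ _),
    ENNReal.toReal_sum (fun a _ => measure_ne_top _ _), ← Finset.sum_sub_distrib,
    Finset.mul_sum]
  exact le_trans (Finset.abs_sum_le_sum_abs _ _)
    (Finset.sum_le_sum fun i _ => hrect _ _ (hB i) (hC i))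

lemma goodSet_biUnion (s : Finset ℕ) {T : ℕ → Set (Z₁ × Z₂)} (h : ∀ n, GoodSet (T n)) :
    GoodSet (⋃ n ∈ s, T n) := by
  classical
  induction s using Finset.induction_on with
  | empty => simpa using goodSet_empty
  | insert _ _ hx ih => rw [Finset.set_biUnion_insert]; exact goodSet_union (h _) ih

lemma exists_goodSet_approx (ρ : Measure (Z₁ × Z₂)) [IsFiniteMeasure ρ] :
    ∀ S : Set (Z₁ × Z₂), MeasurableSet S → ∀ ε : ℝ≥0∞, 0 < ε →
      ∃ T, GoodSet T ∧ ρ (symmDiff S T) ≤ ε := by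
  apply MeasurableSpace.induction_on_inter
    (C := fun S _ => ∀ ε : ℝ≥0∞, 0 < ε → ∃ T, GoodSet T ∧ ρ (symmDiff S T) ≤ ε)
    generateFrom_prod.symm isPiSystem_prod
  · intro ε hε
    exact ⟨∅, goodSet_empty, by simp⟩
  · rintro t ⟨B₁, hB₁, B₂, hB₂, rfl⟩ ε hε
    exact ⟨B₁ ×ˢ B₂, goodSet_rect hB₁ hB₂, by simp⟩
  · rintro t - ht ε hε
    obtain ⟨T, hT, hρ⟩ := ht ε hε
    exact ⟨Tᶜ, goodSet_compl hT, by rwa [compl_symmDiff_compl]⟩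
  · intro f hdisj hmeas hind ε hε
    have hsum : ∑' n, ρ (f n) ≠ ∞ := by
      rw [← measure_iUnion hdisj hmeas]; exact measure_ne_top ρ _
    have htail : ∀ᶠ N in atTop, ∑' k, ρ (f (k + N)) < ε / 2 :=
      (ENNReal.tendsto_sum_nat_add _ hsum).eventually_lt_const (ENNReal.half_pos hε.ne')
    obtain ⟨N, hN⟩ := htail.exists
    rcases Nat.eq_zero_or_pos N with rfl | hNpos
    · refine ⟨∅, goodSet_empty, ?_⟩
      have : ρ (⋃ n, f n) ≤ ∑' k, ρ (f k) := measure_iUnion_le f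
      rw [(by rw [← Set.bot_eq_empty, symmDiff_bot] :
        symmDiff (⋃ n, f n) (∅ : Set (Z₁ × Z₂)) = ⋃ n, f n)]
      calc ρ (⋃ n, f n) ≤ ∑' k, ρ (f k) := measure_iUnion_le f
        _ = ∑' k, ρ (f (k + 0)) := by simp
        _ ≤ ε / 2 := hN.le
        _ ≤ ε := ENNReal.half_le_self
    · have hpos : 0 < ε / 2 / (N : ℝ≥0∞) :=
        ENNReal.div_pos (ENNReal.half_pos hε.ne').ne' (by simp)
      choose T hTgood hTρ using fun n => hind n _ hpos
      refine ⟨⋃ n ∈ Finset.range N, T n, goodSet_biUnion _ hTgood, ?_⟩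
      have hincl : symmDiff (⋃ n, f n) (⋃ n ∈ Finset.range N, T n) ⊆
          (⋃ n ∈ Finset.range N, symmDiff (f n) (T n)) ∪ ⋃ k, f (k + N) := by
        intro z hz
        rw [mem_symmDiff] at hz
        rcases hz with ⟨hzS, hzT⟩ | ⟨hzT, hzS⟩
        · obtain ⟨m, hm⟩ := mem_iUnion.mp hzS
          rcases lt_or_ge m N with hmN | hmN
          · refine Or.inl (mem_iUnion₂.mpr ⟨m, Finset.mem_range.mpr hmN, ?_⟩)
            refine mem_symmDiff.mpr (Or.inl ⟨hm, fun hc => hzT ?_⟩)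
            exact mem_iUnion₂.mpr ⟨m, Finset.mem_range.mpr hmN, hc⟩
          · exact Or.inr (mem_iUnion.mpr ⟨m - N, by rwa [Nat.sub_add_cancel hmN]⟩)
        · obtain ⟨m, hmN, hm⟩ := mem_iUnion₂.mp hzT
          refine Or.inl (mem_iUnion₂.mpr ⟨m, hmN, mem_symmDiff.mpr (Or.inr ⟨hm, fun hc => hzS ?_⟩)⟩)
          exact mem_iUnion.mpr ⟨m, hc⟩
      calc ρ _ ≤ ρ ((⋃ n ∈ Finset.range N, symmDiff (f n) (T n)) ∪ ⋃ k, f (k + N)) :=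
            measure_mono hincl
        _ ≤ ρ (⋃ n ∈ Finset.range N, symmDiff (f n) (T n)) + ρ (⋃ k, f (k + N)) :=
            measure_union_le _ _
        _ ≤ (∑ n ∈ Finset.range N, ρ (symmDiff (f n) (T n))) + ∑' k, ρ (f (k + N)) := by
            gcongr
            · exact measure_biUnion_finset_le _ _
            · exact measure_iUnion_le _
        _ ≤ (∑ n ∈ Finset.range N, ρ (symmDiff (f n) (T n))) + ε / 2 :=
            add_le_add le_rfl hN.le
        _ ≤ (∑ n ∈ Finset.range N, ε / 2 / (N : ℝ≥0∞)) + ε / 2 :=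
            add_le_add (Finset.sum_le_sum fun n _ => hTρ n) le_rfl
        _ ≤ ε / 2 + ε / 2 := by
            gcongr
            rw [Finset.sum_const, Finset.card_range, nsmul_eq_mul]
            exact ENNReal.mul_div_le
        _ = ε := ENNReal.add_halves ε

lemma measure_diff_bound {δ η : Measure (Z₁ × Z₂)} {κ : Measure Z₁}
    [IsFiniteMeasure δ] [IsFiniteMeasure η] [IsFiniteMeasure κ]
    {ε : ℝ} (hrect : ∀ B₁ B₂, MeasurableSet B₁ → MeasurableSet B₂ →
      |(δ (B₁ ×ˢ B₂)).toReal - (η (B₁ ×ˢ B₂)).toReal| ≤ ε * (κ B₁).toReal)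
    {S : Set (Z₁ × Z₂)} (hS : MeasurableSet S) :
    |(δ S).toReal - (η S).toReal| ≤ ε * (κ Set.univ).toReal := by
  refine le_of_forall_pos_le_add fun r hr => ?_
  obtain ⟨T, hTgood, hTρ⟩ := exists_goodSet_approx (δ + η) S hS (ENNReal.ofReal (r / 2))
    (ENNReal.ofReal_pos.mpr (by linarith))
  have hδT : (δ (symmDiff S T)).toReal ≤ r / 2 := by
    refine ENNReal.toReal_le_of_le_ofReal (by linarith) (le_trans ?_ hTρ)
    exact le_trans (le_add_right le_rfl) (le_of_eq (Measure.add_apply δ η _).symm)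
  have hηT : (η (symmDiff S T)).toReal ≤ r / 2 := by
    refine ENNReal.toReal_le_of_le_ofReal (by linarith) (le_trans ?_ hTρ)
    exact le_trans (le_add_left le_rfl) (le_of_eq (Measure.add_apply δ η _).symm)
  have h1 := abs_toReal_sub_le_symmDiff δ S T
  have h2 := abs_toReal_sub_le_symmDiff η S T
  have h3 := goodSet_bound hrect hTgood
  have h4 := abs_sub_le (δ S).toReal (δ T).toReal (η S).toReal
  have h5 := abs_sub_le (δ T).toReal (η T).toReal (η S).toReal
  have h2' : |(η T).toReal - (η S).toReal| ≤ (η (symmDiff S T)).toReal := by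
    rwa [abs_sub_comm]
  have h1' := (abs_le.mp h1).2
  have h2'' := (abs_le.mp h2').2
  have := abs_sub_le (δ S).toReal (δ T).toReal (η S).toReal
  calc |(δ S).toReal - (η S).toReal| ≤ |(δ S).toReal - (δ T).toReal| + |(δ T).toReal - (η S).toReal| := h4
    _ ≤ |(δ S).toReal - (δ T).toReal| + (|(δ T).toReal - (η T).toReal| + |(η T).toReal - (η S).toReal|) := by
        gcongr
    _ ≤ r / 2 + (ε * (κ Set.univ).toReal + r / 2) :=
        add_le_add (le_trans h1 hδT) (add_le_add h3 (le_trans h2' hηT))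
    _ = ε * (κ Set.univ).toReal + r := by ring

end TV3
section TV4
variable {Z₁ Z₂ : Type*} [MeasurableSpace Z₁] [MeasurableSpace Z₂]

lemma integral_diff_bound {δ η : Measure (Z₁ × Z₂)} {κ : Measure Z₁}
    [IsFiniteMeasure δ] [IsFiniteMeasure η] [IsFiniteMeasure κ]
    {ε : ℝ}
    (hrect : ∀ B₁ B₂, MeasurableSet B₁ → MeasurableSet B₂ →
      |(δ (B₁ ×ˢ B₂)).toReal - (η (B₁ ×ˢ B₂)).toReal| ≤ ε * (κ B₁).toReal)
    (huniv : δ Set.univ = η Set.univ)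
    {H : Z₁ × Z₂ → ℝ} (hH : Measurable H) {c : ℝ} (hc : 0 ≤ c)
    (hHb : ∀ z, |H z| ≤ c) :
    |∫ z, H z ∂δ - ∫ z, H z ∂η| ≤ 2 * c * ε * (κ Set.univ).toReal := by
  set F : Z₁ × Z₂ → ℝ := fun z => H z + c with hF
  have hFmeas : Measurable F := hH.add measurable_const
  have hFnn : ∀ z, 0 ≤ F z := fun z => by
    have := (abs_le.mp (hHb z)).1; simp only [hF]; linarith
  have hFle : ∀ z, F z ≤ 2 * c := fun z => by
    have := (abs_le.mp (hHb z)).2; simp only [hF]; linarith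
  have hHintδ : Integrable H δ :=
    Integrable.mono' (integrable_const c) hH.aestronglyMeasurable
      (Filter.Eventually.of_forall fun z => by rw [Real.norm_eq_abs]; exact hHb z)
  have hHintη : Integrable H η :=
    Integrable.mono' (integrable_const c) hH.aestronglyMeasurable
      (Filter.Eventually.of_forall fun z => by rw [Real.norm_eq_abs]; exact hHb z)
  have hFintδ : Integrable F δ := hHintδ.add (integrable_const c)
  have hFintη : Integrable F η := hHintη.add (integrable_const c)
  have hFδ : ∫ z, F z ∂δ = ∫ z, H z ∂δ + c * (δ Set.univ).toReal := by
    rw [hF, integral_add hHintδ (integrable_const c), integral_const, smul_eq_mul, mul_comm, measureReal_def]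
  have hFη : ∫ z, F z ∂η = ∫ z, H z ∂η + c * (η Set.univ).toReal := by
    rw [hF, integral_add hHintη (integrable_const c), integral_const, smul_eq_mul, mul_comm, measureReal_def]
  have hdiff : ∫ z, H z ∂δ - ∫ z, H z ∂η = ∫ z, F z ∂δ - ∫ z, F z ∂η := by
    rw [hFδ, hFη, huniv]; ring
  -- layer cake
  have hlcδ : ∫ z, F z ∂δ = ∫ t in Set.Ioi (0:ℝ), ((δ {a | t < F a}).toReal) :=
    hFintδ.integral_eq_integral_meas_lt (Filter.Eventually.of_forall hFnn)
  have hlcη : ∫ z, F z ∂η = ∫ t in Set.Ioi (0:ℝ), ((η {a | t < F a}).toReal) :=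
    hFintη.integral_eq_integral_meas_lt (Filter.Eventually.of_forall hFnn)
  set g₁ : ℝ → ℝ := fun t => (δ {a | t < F a}).toReal with hg₁
  set g₂ : ℝ → ℝ := fun t => (η {a | t < F a}).toReal with hg₂
  have hempty : ∀ t : ℝ, 2 * c ≤ t → {a : Z₁ × Z₂ | t < F a} = ∅ := by
    intro t ht
    ext a
    simp only [Set.mem_setOf_eq, Set.mem_empty_iff_false, iff_false, not_lt]
    exact le_trans (hFle a) ht
  have hmono : ∀ (μ : Measure (Z₁ × Z₂)) [IsFiniteMeasure μ], Antitone
      (fun t => (μ {a | t < F a}).toReal) := by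
    intro μ hμ s t hst
    exact ENNReal.toReal_mono (measure_ne_top _ _)
      (measure_mono fun a ha => lt_of_le_of_lt hst ha)
  have hgint : ∀ (μ : Measure (Z₁ × Z₂)) [IsFiniteMeasure μ],
      IntegrableOn (fun t => (μ {a | t < F a}).toReal) (Set.Ioi (0:ℝ)) := by
    intro μ hμ
    refine Integrable.mono' (g := (Set.Ioc (0:ℝ) (2*c)).indicator fun _ => (μ Set.univ).toReal)
      ?_ ((hmono μ).measurable.aestronglyMeasurable) ?_
    · rw [integrable_indicator_iff measurableSet_Ioc]
      refine (integrableOn_const_iff).mpr (Or.inr ?_)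
      exact lt_of_le_of_lt (Measure.restrict_apply_le _ _) measure_Ioc_lt_top
    · rw [MeasureTheory.ae_restrict_iff' measurableSet_Ioi]
      refine Filter.Eventually.of_forall fun t ht => ?_
      by_cases h2 : t ≤ 2 * c
      · rw [Set.indicator_of_mem (Set.mem_Ioc.mpr ⟨ht, h2⟩)]
        rw [Real.norm_eq_abs, abs_of_nonneg ENNReal.toReal_nonneg]
        exact ENNReal.toReal_mono (measure_ne_top _ _) (measure_mono (Set.subset_univ _))
      · rw [Set.indicator_of_notMem (fun hc' => h2 (Set.mem_Ioc.mp hc').2)]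
        rw [hempty t (le_of_not_ge h2), measure_empty]
        simp
  have hg₁int : IntegrableOn g₁ (Set.Ioi (0:ℝ)) := hgint δ
  have hg₂int : IntegrableOn g₂ (Set.Ioi (0:ℝ)) := hgint η
  have hptbd : ∀ t ∈ Set.Ioi (0:ℝ), |g₁ t - g₂ t| ≤
      (Set.Ioc (0:ℝ) (2*c)).indicator (fun _ => ε * (κ Set.univ).toReal) t := by
    intro t ht
    by_cases h2 : t ≤ 2 * c
    · rw [Set.indicator_of_mem (Set.mem_Ioc.mpr ⟨ht, h2⟩)]
      exact measure_diff_bound hrect (measurableSet_lt measurable_const hFmeas)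
    · rw [Set.indicator_of_notMem (fun hc' => h2 (Set.mem_Ioc.mp hc').2)]
      have h0 := hempty t (le_of_not_ge h2)
      simp [g₁, g₂, h0]
  calc |∫ z, H z ∂δ - ∫ z, H z ∂η|
      = |∫ t in Set.Ioi (0:ℝ), (g₁ t - g₂ t)| := by
        rw [hdiff, hlcδ, hlcη, integral_sub hg₁int hg₂int]
    _ ≤ ∫ t in Set.Ioi (0:ℝ), |g₁ t - g₂ t| := by
        rw [← Real.norm_eq_abs]
        refine le_trans (norm_integral_le_integral_norm _) ?_
        simp [Real.norm_eq_abs]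
    _ ≤ ∫ t in Set.Ioi (0:ℝ), (Set.Ioc (0:ℝ) (2*c)).indicator
          (fun _ => ε * (κ Set.univ).toReal) t := by
        refine integral_mono_ae ((hg₁int.sub hg₂int).abs) ?_ ?_
        · rw [integrable_indicator_iff measurableSet_Ioc]
          refine (integrableOn_const_iff).mpr (Or.inr ?_)
          exact lt_of_le_of_lt (Measure.restrict_apply_le _ _) measure_Ioc_lt_top
        · filter_upwards [ae_restrict_mem measurableSet_Ioi] with t ht using hptbd t ht
    _ = 2 * c * ε * (κ Set.univ).toReal := by
        rw [integral_indicator measurableSet_Ioc, setIntegral_const, measureReal_def,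
          Measure.restrict_apply measurableSet_Ioc,
          Set.inter_eq_self_of_subset_left Set.Ioc_subset_Ioi_self, Real.volume_Ioc,
          smul_eq_mul, ENNReal.toReal_ofReal (by linarith)]
        ring

end TV4

section Phi
variable {Ω : Type*} {𝒢₁ 𝒢₂ : MeasurableSpace Ω} [m0 : MeasurableSpace Ω] {P : Measure Ω}
  [IsProbabilityMeasure P]

lemma phiDep_bddAbove :
    BddAbove {x : ℝ | ∃ A B : Set Ω, MeasurableSet[𝒢₁] A ∧ MeasurableSet[𝒢₂] B ∧ 0 < P A ∧
      x = |(P (A ∩ B) / P A).toReal - (P B).toReal|} := by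
  refine ⟨1, fun x hx => ?_⟩
  obtain ⟨A, B, -, -, hA, rfl⟩ := hx
  have h1 : (P (A ∩ B) / P A) ≤ 1 :=
    le_trans (ENNReal.div_le_div_right (measure_mono Set.inter_subset_left) _)
      ENNReal.div_self_le_one
  have h2 : (P (A ∩ B) / P A).toReal ≤ 1 := by
    simpa using ENNReal.toReal_mono (by simp) h1
  have h3 : (P B).toReal ≤ 1 := by
    simpa using ENNReal.toReal_mono (by simp) (prob_le_one (μ := P) (s := B))
  rw [abs_sub_le_iff]
  constructor
  · have := ENNReal.toReal_nonneg (a := P B); linarith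
  · have := ENNReal.toReal_nonneg (a := P (A ∩ B) / P A); linarith

lemma le_phiDep {A B : Set Ω} (hA : MeasurableSet[𝒢₁] A) (hB : MeasurableSet[𝒢₂] B)
    (hPA : 0 < P A) :
    |(P (A ∩ B) / P A).toReal - (P B).toReal| ≤ phiDep P 𝒢₁ 𝒢₂ :=
  le_csSup phiDep_bddAbove ⟨A, B, hA, hB, hPA, rfl⟩

lemma phiDep_nonneg : 0 ≤ phiDep P 𝒢₁ 𝒢₂ := by
  have h := le_phiDep (P := P) (𝒢₁ := 𝒢₁) (𝒢₂ := 𝒢₂) (A := (Set.univ : Set Ω))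
    (B := (∅ : Set Ω)) (@MeasurableSet.univ Ω 𝒢₁) (@MeasurableSet.empty Ω 𝒢₂) (by simp)
  simpa using h

lemma phi_cov_bound {A B : Set Ω} (hA : MeasurableSet[𝒢₁] A) (hB : MeasurableSet[𝒢₂] B) :
    |(P (A ∩ B)).toReal - (P A).toReal * (P B).toReal| ≤ phiDep P 𝒢₁ 𝒢₂ * (P A).toReal := by
  rcases eq_or_ne (P A) 0 with h0 | h0
  · have hAB : P (A ∩ B) = 0 := measure_mono_null Set.inter_subset_left h0
    simp [h0, hAB]
  · have hlt : 0 < P A := pos_iff_ne_zero.mpr h0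
    have hne : (P A).toReal ≠ 0 := ENNReal.toReal_ne_zero.mpr ⟨h0, measure_ne_top _ _⟩
    have hp : 0 < (P A).toReal := lt_of_le_of_ne ENNReal.toReal_nonneg (Ne.symm hne)
    have key := le_phiDep hA hB hlt
    rw [ENNReal.toReal_div, div_sub' hne, abs_div, abs_of_pos hp, div_le_iff₀ hp] at key
    calc |(P (A ∩ B)).toReal - (P A).toReal * (P B).toReal| ≤ phiDep P 𝒢₁ 𝒢₂ * (P A).toReal :=
      key
      _ = phiDep P 𝒢₁ 𝒢₂ * (P A).toReal := rfl

end Phi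

section CondexpHelper

lemma ae_le_of_forall_setIntegral_le' {Ω : Type*} {𝒢 : MeasurableSpace Ω}
    {m0 : MeasurableSpace Ω} (h𝒢 : 𝒢 ≤ m0) (P : Measure Ω) [IsFiniteMeasure P]
    {f : Ω → ℝ} (hf : Integrable f P) (hfm : StronglyMeasurable[𝒢] f) {K : ℝ}
    (h : ∀ A : Set Ω, MeasurableSet[𝒢] A → ∫ ω in A, f ω ∂P ≤ K * (P A).toReal) :
    ∀ᵐ ω ∂P, f ω ≤ K := by
  set A : ℕ → Set Ω := fun n => {ω | K + 1/(n+1) ≤ f ω} with hA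
  have hAmeas : ∀ n, MeasurableSet[𝒢] (A n) := fun n =>
    hfm.measurable measurableSet_Ici
  have hnull : ∀ n, P (A n) = 0 := by
    intro n
    have hposn : (0:ℝ) < 1/(n+1) := by positivity
    have h1 : (K + 1/(n+1)) * (P (A n)).toReal ≤ ∫ ω in A n, f ω ∂P :=
      setIntegral_ge_of_const_le_real (h𝒢 _ (hAmeas n)) (measure_ne_top P _)
        (fun x hx => hx) hf.integrableOn
    have h2 := h (A n) (hAmeas n)
    have h3 : (P (A n)).toReal ≤ 0 := by nlinarith [ENNReal.toReal_nonneg (a := P (A n))]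
    have h4 : (P (A n)).toReal = 0 := le_antisymm h3 ENNReal.toReal_nonneg
    rcases (ENNReal.toReal_eq_zero_iff _).mp h4 with h5 | h5
    · exact h5
    · exact absurd h5 (measure_ne_top P _)
  rw [ae_iff]
  refine measure_mono_null (fun ω hω => ?_) (measure_iUnion_null hnull)
  simp only [Set.mem_setOf_eq, not_le] at hω
  obtain ⟨n, hn⟩ := exists_nat_one_div_lt (show (0:ℝ) < f ω - K by linarith)
  exact Set.mem_iUnion.mpr ⟨n, by simp only [hA, Set.mem_setOf_eq]; push_cast; linarith⟩

end CondexpHelper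

end AuxiliaryProofs

/-- for `H ∈ L^∞(X^d, Borel, ν)` with `ν = (ζ + μ₁ × μ₂)/2`, the conditional
expectation `E[H(V₁,V₂)|𝒢₁]` exists (i.e. `H(V₁,V₂)` is integrable), `h(v) = E[H(v,V₂)]` exists
for `μ₁`-a.e. `v`, and a.s. `|E[H(V₁,V₂)|𝒢₁] − h(V₁)| ≤ 2‖H‖_{L^∞(ν)} φ(𝒢₁,𝒢₂)`. -/
theorem statement0
    {Ω : Type*} (𝒢₁ 𝒢₂ : MeasurableSpace Ω) [m0 : MeasurableSpace Ω]
    (P : Measure Ω) [IsProbabilityMeasure P]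
    {𝓧 : Type*} [MetricSpace 𝓧] [MeasurableSpace 𝓧] [BorelSpace 𝓧]
    (d₁ d₂ : ℕ) (h𝒢₁ : 𝒢₁ ≤ m0) (h𝒢₂ : 𝒢₂ ≤ m0)
    (V₁ : Ω → Fin d₁ → 𝓧) (V₂ : Ω → Fin d₂ → 𝓧)
    (hV₁ : Measurable[𝒢₁] V₁) (hV₂ : Measurable[𝒢₂] V₂)
    (H : (Fin d₁ → 𝓧) × (Fin d₂ → 𝓧) → ℝ) (hHmeas : Measurable H)
    (hHbdd : MemLp H ⊤ ((2 : ℝ≥0∞)⁻¹ • (Measure.map (fun ω => (V₁ ω, V₂ ω)) P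
      + (Measure.map V₁ P).prod (Measure.map V₂ P)))) :
    Integrable (fun ω => H (V₁ ω, V₂ ω)) P ∧
    (∀ᵐ v ∂(Measure.map V₁ P), Integrable (fun ω => H (v, V₂ ω)) P) ∧
    ∀ᵐ ω ∂P,
      |(P[fun ω' => H (V₁ ω', V₂ ω')|𝒢₁]) ω - ∫ ω', H (V₁ ω, V₂ ω') ∂P|
        ≤ 2 * (eLpNorm H ⊤ ((2 : ℝ≥0∞)⁻¹ • (Measure.map (fun ω => (V₁ ω, V₂ ω)) P
            + (Measure.map V₁ P).prod (Measure.map V₂ P)))).toReal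
          * phiDep P 𝒢₁ 𝒢₂ := by
  have hV₁m : Measurable V₁ := hV₁.mono h𝒢₁ le_rfl
  have hV₂m : Measurable V₂ := hV₂.mono h𝒢₂ le_rfl
  have hTm : Measurable (fun ω => (V₁ ω, V₂ ω)) := hV₁m.prodMk hV₂m
  set μ₁ : Measure (Fin d₁ → 𝓧) := Measure.map V₁ P with hμ₁
  set μ₂ : Measure (Fin d₂ → 𝓧) := Measure.map V₂ P with hμ₂
  set ζ : Measure ((Fin d₁ → 𝓧) × (Fin d₂ → 𝓧)) :=
    Measure.map (fun ω => (V₁ ω, V₂ ω)) P with hζ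
  set ν : Measure ((Fin d₁ → 𝓧) × (Fin d₂ → 𝓧)) := (2:ℝ≥0∞)⁻¹ • (ζ + μ₁.prod μ₂) with hν
  haveI : IsProbabilityMeasure μ₁ := Measure.isProbabilityMeasure_map hV₁m.aemeasurable
  haveI : IsProbabilityMeasure μ₂ := Measure.isProbabilityMeasure_map hV₂m.aemeasurable
  haveI : IsProbabilityMeasure ζ := Measure.isProbabilityMeasure_map hTm.aemeasurable
  set C : ℝ := (eLpNorm H ⊤ ν).toReal with hCdef
  have hCnn : (0:ℝ) ≤ C := ENNReal.toReal_nonneg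
  set φ : ℝ := phiDep P 𝒢₁ 𝒢₂ with hφdef
  have hφnn : 0 ≤ φ := phiDep_nonneg
  have hEne : eLpNorm H ⊤ ν ≠ ∞ := hHbdd.eLpNorm_ne_top
  have hνbound : ∀ᵐ z ∂ν, |H z| ≤ C := by
    have h1 : ∀ᵐ z ∂ν, (‖H z‖₊ : ℝ≥0∞) ≤ eLpNormEssSup H ν := ae_le_eLpNormEssSup
    filter_upwards [h1] with z hz
    have h2 : ((‖H z‖₊ : ℝ≥0∞)).toReal ≤ (eLpNormEssSup H ν).toReal :=
      ENNReal.toReal_mono (by rwa [← eLpNorm_exponent_top (f := H) (μ := ν)]) hz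
    rw [hCdef, eLpNorm_exponent_top]
    simpa [Real.norm_eq_abs] using h2
  have hacζ : ζ ≪ ν := by
    refine Measure.AbsolutelyContinuous.mk fun s hs h0 => ?_
    rw [hν, Measure.smul_apply, smul_eq_mul, mul_eq_zero] at h0
    rcases h0 with h0 | h0
    · exact absurd h0 (by simp)
    · rw [Measure.add_apply, add_eq_zero] at h0; exact h0.1
  have hacμ : μ₁.prod μ₂ ≪ ν := by
    refine Measure.AbsolutelyContinuous.mk fun s hs h0 => ?_
    rw [hν, Measure.smul_apply, smul_eq_mul, mul_eq_zero] at h0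
    rcases h0 with h0 | h0
    · exact absurd h0 (by simp)
    · rw [Measure.add_apply, add_eq_zero] at h0; exact h0.2
  have hζbound : ∀ᵐ z ∂ζ, |H z| ≤ C := hacζ.ae_le hνbound
  have hμbound : ∀ᵐ z ∂(μ₁.prod μ₂), |H z| ≤ C := hacμ.ae_le hνbound
  -- Part 1
  have hYbound : ∀ᵐ ω ∂P, |H (V₁ ω, V₂ ω)| ≤ C := by
    have := (ae_map_iff hTm.aemeasurable
      (measurableSet_le hHmeas.abs measurable_const)).mp hζbound
    exact this
  have part1 : Integrable (fun ω => H (V₁ ω, V₂ ω)) P := by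
    refine Integrable.mono' (integrable_const C) (hHmeas.comp hTm).aestronglyMeasurable ?_
    filter_upwards [hYbound] with ω h using by rwa [Real.norm_eq_abs]
  -- Part 2
  have h2ae : ∀ᵐ v ∂μ₁, ∀ᵐ y ∂μ₂, |H (v, y)| ≤ C := Measure.ae_ae_of_ae_prod hμbound
  have part2 : ∀ᵐ v ∂μ₁, Integrable (fun ω => H (v, V₂ ω)) P := by
    filter_upwards [h2ae] with v hv
    have hb : ∀ᵐ ω ∂P, |H (v, V₂ ω)| ≤ C :=
      (ae_map_iff hV₂m.aemeasurable (measurableSet_le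
        (hHmeas.comp measurable_prodMk_left).abs measurable_const)).mp hv
    refine Integrable.mono' (integrable_const C)
      ((hHmeas.comp (measurable_const.prodMk hV₂m))).aestronglyMeasurable ?_
    filter_upwards [hb] with ω h using by rwa [Real.norm_eq_abs]
  refine ⟨part1, part2, ?_⟩
  -- Part 3
  set g : (Fin d₁ → 𝓧) → ℝ := fun v => ∫ y, H (v, y) ∂μ₂ with hgdef
  have hgsm : StronglyMeasurable g := hHmeas.stronglyMeasurable.integral_prod_right'
  have hg_eq : ∀ v, g v = ∫ ω', H (v, V₂ ω') ∂P := by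
    intro v
    show (∫ y, H (v, y) ∂μ₂) = _
    rw [hμ₂]
    exact integral_map hV₂m.aemeasurable
      (hHmeas.comp measurable_prodMk_left).aestronglyMeasurable
  set hbar : Ω → ℝ := fun ω => g (V₁ ω) with hbardef
  have hbar_sm : StronglyMeasurable[𝒢₁] hbar := hgsm.comp_measurable hV₁
  have hgbound : ∀ᵐ v ∂μ₁, |g v| ≤ C := by
    filter_upwards [h2ae] with v hv
    have h1 : ‖∫ y, H (v, y) ∂μ₂‖ ≤ ∫ _, C ∂μ₂ :=
      norm_integral_le_of_norm_le (integrable_const C)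
        (by filter_upwards [hv] with y hy using by rwa [Real.norm_eq_abs])
    rw [integral_const, measureReal_def, measure_univ, ENNReal.toReal_one, one_smul] at h1
    show |∫ y, H (v, y) ∂μ₂| ≤ C
    rwa [← Real.norm_eq_abs]
  have hbarbound : ∀ᵐ ω ∂P, |hbar ω| ≤ C :=
    (ae_map_iff hV₁m.aemeasurable
      (measurableSet_le hgsm.measurable.abs measurable_const)).mp hgbound
  have hbar_int : Integrable hbar P := by
    refine Integrable.mono' (integrable_const C)
      ((hbar_sm.mono h𝒢₁).aestronglyMeasurable) ?_
    filter_upwards [hbarbound] with ω h using by rwa [Real.norm_eq_abs]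
  -- truncation
  set H' : (Fin d₁ → 𝓧) × (Fin d₂ → 𝓧) → ℝ := fun z => max (-C) (min (H z) C) with hH'def
  have hH'meas : Measurable H' := measurable_const.max (hHmeas.min measurable_const)
  have hH'b : ∀ z, |H' z| ≤ C := by
    intro z
    rw [abs_le]
    exact ⟨le_max_left _ _, max_le (by linarith) (min_le_right _ _)⟩
  have hH'eq : ∀ z, |H z| ≤ C → H' z = H z := by
    intro z hz
    show max (-C) (min (H z) C) = H z
    rw [min_eq_left (abs_le.mp hz).2, max_eq_right (abs_le.mp hz).1]
  -- key set-integral bound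
  have key : ∀ A : Set Ω, MeasurableSet[𝒢₁] A →
      |∫ ω in A, (H (V₁ ω, V₂ ω) - hbar ω) ∂P| ≤ 2 * C * φ * (P A).toReal := by
    intro A hA𝒢
    have hA : MeasurableSet A := h𝒢₁ _ hA𝒢
    set δ : Measure ((Fin d₁ → 𝓧) × (Fin d₂ → 𝓧)) :=
      Measure.map (fun ω => (V₁ ω, V₂ ω)) (P.restrict A) with hδdef
    set κ : Measure (Fin d₁ → 𝓧) := Measure.map V₁ (P.restrict A) with hκdef
    set η : Measure ((Fin d₁ → 𝓧) × (Fin d₂ → 𝓧)) := κ.prod μ₂ with hηdef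
    haveI : IsFiniteMeasure δ := Measure.isFiniteMeasure_map _ _
    haveI : IsFiniteMeasure κ := Measure.isFiniteMeasure_map _ _
    haveI : IsFiniteMeasure η := by rw [hηdef]; infer_instance
    have hδac : δ ≪ ν :=
      (Measure.absolutelyContinuous_of_le
        (Measure.map_mono Measure.restrict_le_self hTm)).trans hacζ
    have hκac : κ ≪ μ₁ :=
      Measure.absolutelyContinuous_of_le (Measure.map_mono Measure.restrict_le_self hV₁m)
    have hηac : η ≪ ν := (hκac.prod (Measure.AbsolutelyContinuous.refl μ₂)).trans hacμ
    have hδb : ∀ᵐ z ∂δ, |H z| ≤ C := hδac.ae_le hνbound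
    have hηb : ∀ᵐ z ∂η, |H z| ≤ C := hηac.ae_le hνbound
    have hδHH' : H' =ᵐ[δ] H := by filter_upwards [hδb] with z hz using hH'eq z hz
    have hηHH' : H' =ᵐ[η] H := by filter_upwards [hηb] with z hz using hH'eq z hz
    have hκapp : ∀ B₁ : Set (Fin d₁ → 𝓧), MeasurableSet B₁ → κ B₁ = P (V₁ ⁻¹' B₁ ∩ A) := by
      intro B₁ h
      rw [hκdef, Measure.map_apply hV₁m h, Measure.restrict_apply (hV₁m h)]
    have hrect : ∀ B₁ B₂, MeasurableSet B₁ → MeasurableSet B₂ →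
        |(δ (B₁ ×ˢ B₂)).toReal - (η (B₁ ×ˢ B₂)).toReal| ≤ φ * (κ B₁).toReal := by
      intro B₁ B₂ h1 h2
      have hδr : δ (B₁ ×ˢ B₂) = P ((V₁ ⁻¹' B₁ ∩ A) ∩ V₂ ⁻¹' B₂) := by
        rw [hδdef, Measure.map_apply hTm (h1.prod h2), Set.mk_preimage_prod,
          Measure.restrict_apply ((hV₁m h1).inter (hV₂m h2))]
        congr 1
        ext ω
        simp only [Set.mem_inter_iff, Set.mem_preimage]
        tauto
      have hηr : η (B₁ ×ˢ B₂) = P (V₁ ⁻¹' B₁ ∩ A) * P (V₂ ⁻¹' B₂) := by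
        rw [hηdef, Measure.prod_prod, hκapp B₁ h1, hμ₂, Measure.map_apply hV₂m h2]
      rw [hδr, hηr, hκapp B₁ h1, ENNReal.toReal_mul]
      exact phi_cov_bound (P := P) ((hV₁ h1).inter hA𝒢) (hV₂ h2)
    have hκuniv : κ Set.univ = P A := by
      rw [hκapp _ MeasurableSet.univ]; simp
    have huniv : δ Set.univ = η Set.univ := by
      rw [hδdef, Measure.map_apply hTm MeasurableSet.univ, Set.preimage_univ,
        Measure.restrict_apply_univ, hηdef, ← Set.univ_prod_univ, Measure.prod_prod,
        hκuniv, measure_univ, mul_one]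
    have hI1 : ∫ ω in A, H (V₁ ω, V₂ ω) ∂P = ∫ z, H z ∂δ := by
      rw [hδdef]
      exact (integral_map hTm.aemeasurable hHmeas.aestronglyMeasurable).symm
    have hHintη : Integrable H η := by
      refine Integrable.mono' (integrable_const C) hHmeas.aestronglyMeasurable ?_
      filter_upwards [hηb] with z hz using by rwa [Real.norm_eq_abs]
    have hI2 : ∫ ω in A, hbar ω ∂P = ∫ z, H z ∂η := by
      have e1 : ∫ ω in A, hbar ω ∂P = ∫ v, g v ∂κ := by
        rw [hκdef]
        exact (integral_map hV₁m.aemeasurable hgsm.aestronglyMeasurable).symm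
      have e2 : ∫ z, H z ∂η = ∫ v, ∫ y, H (v, y) ∂μ₂ ∂κ := by
        rw [hηdef]
        exact integral_prod H hHintη
      rw [e1, e2]
    have habs : |∫ z, H z ∂δ - ∫ z, H z ∂η| ≤ 2 * C * φ * (κ Set.univ).toReal := by
      rw [← integral_congr_ae hδHH', ← integral_congr_ae hηHH']
      exact integral_diff_bound hrect huniv hH'meas hCnn hH'b
    rw [integral_sub part1.integrableOn hbar_int.integrableOn, hI1, hI2]
    calc |∫ z, H z ∂δ - ∫ z, H z ∂η| ≤ 2 * C * φ * (κ Set.univ).toReal := habs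
      _ = 2 * C * φ * (P A).toReal := by rw [hκuniv]
  -- conditional expectation
  set Y : Ω → ℝ := fun ω => H (V₁ ω, V₂ ω) with hYdef
  have hYint : Integrable Y P := part1
  have hdiffint : Integrable (fun ω => Y ω - hbar ω) P := hYint.sub hbar_int
  set f : Ω → ℝ := P[fun ω => Y ω - hbar ω|𝒢₁] with hfdef
  have hfint : Integrable f P := integrable_condExp
  have hfsm : StronglyMeasurable[𝒢₁] f := stronglyMeasurable_condExp
  have hsetf : ∀ A : Set Ω, MeasurableSet[𝒢₁] A →
      |∫ ω in A, f ω ∂P| ≤ 2 * C * φ * (P A).toReal := by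
    intro A hA
    rw [hfdef, setIntegral_condExp h𝒢₁ hdiffint hA]
    exact key A hA
  have h1 : ∀ᵐ ω ∂P, f ω ≤ 2 * C * φ :=
    ae_le_of_forall_setIntegral_le' h𝒢₁ P hfint hfsm
      (fun A hA => le_of_abs_le (hsetf A hA))
  have h2 : ∀ᵐ ω ∂P, -f ω ≤ 2 * C * φ := by
    refine ae_le_of_forall_setIntegral_le' h𝒢₁ P hfint.neg hfsm.neg ?_
    intro A hA
    simp only [Pi.neg_apply]
    rw [integral_neg]
    have := (abs_le.mp (hsetf A hA)).1
    linarith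
  have hcesub : P[fun ω => Y ω - hbar ω|𝒢₁] =ᵐ[P] P[Y|𝒢₁] - P[hbar|𝒢₁] :=
    condExp_sub hYint hbar_int 𝒢₁
  have hceh : P[hbar|𝒢₁] = hbar := condExp_of_stronglyMeasurable h𝒢₁ hbar_sm hbar_int
  filter_upwards [h1, h2, hcesub] with ω hω1 hω2 hωe
  have hfo : f ω = (P[Y|𝒢₁]) ω - hbar ω := by
    rw [hfdef, hωe, Pi.sub_apply, hceh]
  have hgoal : |(P[Y|𝒢₁]) ω - hbar ω| ≤ 2 * C * φ := by
    rw [← hfo]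
    exact abs_le.mpr ⟨by linarith, hω1⟩
  calc |(P[Y|𝒢₁]) ω - ∫ ω', H (V₁ ω, V₂ ω') ∂P|
      = |(P[Y|𝒢₁]) ω - hbar ω| := by
        have hb : hbar ω = ∫ ω', H (V₁ ω, V₂ ω') ∂P := hg_eq (V₁ ω)
        rw [hb]
    _ ≤ 2 * C * φ := hgoal
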